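/- Let n be a natural number with n ≥ 1, let S be an n×n real matrix with IsUnit S.det, let f : ℝ → ℝ be twice continuously differentiable on a neighbourhood of r₀ ∈ ℝ with f r₀ ≠ 0, and define M : ℝ → Matrix (Fin n) (Fin n) ℝ by M r = (f r) • S. Then the rr-equation trace ((M r₀)⁻¹ * deriv (deriv M) r₀) = (1/2) * trace ((M r₀)⁻¹ * deriv M r₀ * ((M r₀)⁻¹ * deriv M r₀)) holds if and only if 2 * f r₀ * deriv (deriv f) r₀ = (deriv f r₀)^2. -/

import Mathlib

open Matrix

attribute [local instance] Matrix.normedAddCommGroup Matrix.normedSpace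

theorem rr_equation_iff_scalar_ode
    (n : ℕ) (hn : 1 ≤ n) (S : Matrix (Fin n) (Fin n) ℝ) (hS : IsUnit S.det)
    (f : ℝ → ℝ) (r₀ : ℝ) (hf : ContDiffAt ℝ 2 f r₀) (hfne : f r₀ ≠ 0)
    (M : ℝ → Matrix (Fin n) (Fin n) ℝ) (hM : ∀ r, M r = f r • S) :
    ((M r₀)⁻¹ * deriv (deriv M) r₀).trace =
        (1 / 2) * ((M r₀)⁻¹ * deriv M r₀ * ((M r₀)⁻¹ * deriv M r₀)).trace ↔
      2 * f r₀ * deriv (deriv f) r₀ = (deriv f r₀) ^ 2 := by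
  have hMfun : M = fun r => f r • S := funext hM
  -- eventually differentiable
  have hev : ∀ᶠ r in nhds r₀, DifferentiableAt ℝ f r := by
    filter_upwards [hf.eventually (by norm_num)] with r hr
    exact hr.differentiableAt (by norm_num)
  have hderivM : ∀ᶠ r in nhds r₀, deriv M r = deriv f r • S := by
    filter_upwards [hev] with r hr
    rw [hMfun]; exact deriv_smul_const hr S
  -- deriv f differentiable at r₀
  have hfd1 : ContDiffAt ℝ 1 (fderiv ℝ f) r₀ := hf.fderiv_right (by norm_num)
  have hdf : DifferentiableAt ℝ (deriv f) r₀ := by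
    have h1 : deriv f = fun x => fderiv ℝ f x 1 := funext fun x => (fderiv_apply_one_eq_deriv).symm
    rw [h1]
    exact (hfd1.differentiableAt one_ne_zero).clm_apply (differentiableAt_const _)
  have hM2 : deriv (deriv M) r₀ = deriv (deriv f) r₀ • S := by
    exact (Filter.EventuallyEq.deriv_eq hderivM).trans (deriv_smul_const hdf S)
  have hM1 : deriv M r₀ = deriv f r₀ • S := hderivM.self_of_nhds
  -- inverse
  have hdet : IsUnit (M r₀).det := by
    rw [hM r₀, det_smul]
    exact (isUnit_iff_ne_zero.2 (pow_ne_zero _ hfne)).mul hS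
  have key : ∀ c : ℝ, (M r₀)⁻¹ * (c • S) = (c / f r₀) • (1 : Matrix (Fin n) (Fin n) ℝ) := by
    intro c
    have : c • S = (c / f r₀) • M r₀ := by
      rw [hM r₀, smul_smul, div_mul_cancel₀ _ hfne]
    rw [this, Matrix.mul_smul, nonsing_inv_mul _ hdet]
  rw [hM1, hM2, key, key, smul_mul_assoc, Matrix.mul_smul, smul_smul, mul_one,
    trace_smul, trace_smul, trace_one]
  simp only [smul_eq_mul, Fintype.card_fin]
  have hn0 : (n : ℝ) ≠ 0 := Nat.cast_ne_zero.2 (by omega)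
  constructor <;> intro h
  · field_simp at h
    refine mul_left_cancel₀ (mul_ne_zero hn0 hfne) ?_
    linear_combination (↑n * f r₀) * h
  · field_simp
    linear_combination h
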